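/- Let T be a finite rooted tree with leaves at possibly different depths. For a total order sigma on the leaves define weights omega_j(sigma) = 1 + number of proper ancestors a of leaf j such that j is sigma-maximal among leaf descendants of a, and let (omega_(1)(sigma),...,omega_(n)(sigma)) be the ascending-sorted weights. Then the ordering sigma* that ranks leaves in ascending order of their depth (deepest leaf last) yields sorted weights whose prefix sums are minimal: for every other ordering sigma and every k, sum_{i=1}^k omega_(i)(sigma*) <= sum_{i=1}^k omega_(i)(sigma). -/

import Mathlib

open scoped Classical

/-- The multiset of leaf weights of a finite rooted tree under a total order `σ` on the
leaves: the weight of a leaf `j` is `1` plus the number of proper ancestors `a` of `j`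
such that `j` is `σ`-maximal among the leaves descending from `a`. -/
noncomputable def leafWeights {N : Type*} [Fintype N] (parent : N → N)
    (leaf : N → Prop) (σ : N → ℝ) : Multiset ℕ :=
  (Finset.univ.filter leaf).val.map (fun j =>
    1 + Set.ncard {a : N | (∃ k, 0 < k ∧ parent^[k] j = a) ∧ a ≠ j ∧
      ∀ i, leaf i → (∃ m, parent^[m] i = a) → σ i ≤ σ j})

set_option linter.unusedSectionVars false

namespace LFWaux

variable {N : Type*} [Fintype N]

noncomputable def Dset (parent : N → N) (leaf : N → Prop) (a : N) : Finset N :=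
  Finset.univ.filter (fun i => leaf i ∧ ∃ k, parent^[k] i = a)

noncomputable def msel (parent : N → N) (leaf : N → Prop) (τ : N → ℝ) (a : N) : N :=
  if h : (Dset parent leaf a).Nonempty then
    Classical.choose (Finset.exists_max_image _ τ h) else a

noncomputable def W (parent : N → N) (leaf : N → Prop) (τ : N → ℝ) (S : Finset N) :
    Multiset ℕ :=
  (S.filter leaf).val.map (fun j => (S.filter (fun a => msel parent leaf τ a = j)).card)

noncomputable def chainF (parent : N → N) (j : N) (s : ℕ) : Finset N :=
  (Finset.range s).image (fun m => parent^[m] j)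

def g (c : ℕ) (M : Multiset ℕ) : ℕ := ((M.sort (· ≤ ·)).drop (Multiset.card M - c)).sum

section Tree

variable {parent : N → N} {depth : N → ℕ} {root : N}
  (hroot : parent root = root)
  (hdepth0 : ∀ v, depth v = 0 ↔ v = root)
  (hparent : ∀ v, v ≠ root → depth v = depth (parent v) + 1)
  {leaf : N → Prop} (hleaf : ∀ v, leaf v ↔ ∀ u, parent u = v → u = v)

omit [Fintype N] in
lemma subtree_closed {S : Finset N} (hS : ∀ u, parent u ∈ S → u ∈ S) {a : N} (ha : a ∈ S) :
    ∀ k i, parent^[k] i = a → i ∈ S := by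
  intro k
  induction k with
  | zero => intro i h; rwa [← h] at ha
  | succ k ih =>
    intro i h
    rw [Function.iterate_succ_apply] at h
    exact hS i (ih _ h)

include hroot hdepth0 hparent

lemma depth_iterate : ∀ k, k ≤ depth x → depth (parent^[k] x) + k = depth x := by
  intro k
  induction k with
  | zero => simp
  | succ k ih =>
    intro hk
    have h1 : depth (parent^[k] x) + k = depth x := ih (le_of_lt (Nat.lt_of_succ_le hk))
    have hne : parent^[k] x ≠ root := by
      intro h
      rw [h] at h1
      have : depth root = 0 := (hdepth0 root).2 rfl
      omega
    rw [Function.iterate_succ_apply']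
    have := hparent _ hne
    omega

lemma iterate_root : ∀ k, depth x ≤ k → parent^[k] x = root := by
  intro k hk
  have h1 : depth (parent^[depth x] x) + depth x = depth x := depth_iterate hroot hdepth0 hparent _ le_rfl
  have h2 : parent^[depth x] x = root := (hdepth0 _).1 (by omega)
  have : parent^[k] x = parent^[k - depth x] (parent^[depth x] x) := by
    rw [← Function.iterate_add_apply]
    congr 1
    omega
  rw [this, h2]
  exact Function.iterate_fixed hroot _

lemma iterate_inj {k l : ℕ} (hk : k ≤ depth x) (hl : l ≤ depth x)
    (h : parent^[k] x = parent^[l] x) : k = l := by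
  have h1 := depth_iterate (x := x) hroot hdepth0 hparent k hk
  have h2 := depth_iterate (x := x) hroot hdepth0 hparent l hl
  rw [h] at h1
  omega

lemma anc_small {i a : N} (h : ∃ k, parent^[k] i = a) : ∃ k, k ≤ depth i ∧ parent^[k] i = a := by
  obtain ⟨k, hk⟩ := h
  rcases le_or_gt k (depth i) with h' | h'
  · exact ⟨k, h', hk⟩
  · refine ⟨depth i, le_rfl, ?_⟩
    rw [iterate_root hroot hdepth0 hparent _ le_rfl]
    rw [← hk, iterate_root hroot hdepth0 hparent _ h'.le]

include hleaf

omit hroot hdepth0 hparent in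
lemma leaf_subtree {j : N} (hj : leaf j) : ∀ k i, parent^[k] i = j → i = j := by
  intro k
  induction k with
  | zero => intro i h; simpa using h
  | succ k ih =>
    intro i h
    rw [Function.iterate_succ_apply'] at h
    have := (hleaf j).1 hj _ h
    exact ih i (by rwa [this] at h)

lemma exists_leaf_desc : ∀ a : N, ∃ i, leaf i ∧ ∃ k, parent^[k] i = a := by
  classical
  have H : ∀ n a, Finset.univ.sup depth + 1 - depth a ≤ n → ∃ i, leaf i ∧ ∃ k, parent^[k] i = a := by
    intro n
    induction n with
    | zero =>
      intro a ha
      have : depth a ≤ Finset.univ.sup depth := Finset.le_sup (Finset.mem_univ a)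
      omega
    | succ n ih =>
      intro a ha
      by_cases hla : leaf a
      · exact ⟨a, hla, 0, rfl⟩
      · rw [hleaf a] at hla
        push_neg at hla
        obtain ⟨u, hu, hune⟩ := hla
        have hur : u ≠ root := by
          intro h
          have ha' : a = root := by rw [← hu, h, hroot]
          exact hune (h.trans ha'.symm)
        have hdu : depth u = depth a + 1 := by rw [hparent u hur, hu]
        obtain ⟨i, hi, k, hk⟩ := ih u (by omega)
        exact ⟨i, hi, k + 1, by rw [Function.iterate_succ_apply', hk, hu]⟩
  intro a
  exact H _ a le_rfl

lemma Dset_nonempty (a : N) : (Dset parent leaf a).Nonempty := by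
  obtain ⟨i, hi, hk⟩ := exists_leaf_desc hroot hdepth0 hparent hleaf a
  exact ⟨i, by simp [Dset, hi, hk]⟩

lemma msel_spec (τ : N → ℝ) (a : N) :
    msel parent leaf τ a ∈ Dset parent leaf a ∧
      ∀ i ∈ Dset parent leaf a, τ i ≤ τ (msel parent leaf τ a) := by
  rw [msel, dif_pos (Dset_nonempty hroot hdepth0 hparent hleaf a)]
  obtain ⟨h1, h2⟩ := Classical.choose_spec
    (Finset.exists_max_image _ τ (Dset_nonempty hroot hdepth0 hparent hleaf a))
  exact ⟨h1, h2⟩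

lemma msel_eq {τ : N → ℝ} (hτ : Function.Injective τ) {a j : N}
    (hj : j ∈ Dset parent leaf a) (hmax : ∀ i ∈ Dset parent leaf a, τ i ≤ τ j) :
    msel parent leaf τ a = j := by
  obtain ⟨h1, h2⟩ := msel_spec hroot hdepth0 hparent hleaf τ a
  exact hτ (le_antisymm (hmax _ h1) (h2 _ hj))

lemma Dset_leaf {j : N} (hj : leaf j) : Dset parent leaf j = {j} := by
  ext i
  simp only [Dset, Finset.mem_filter, Finset.mem_univ, true_and, Finset.mem_singleton]
  constructor
  · rintro ⟨hi, k, hk⟩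
    exact leaf_subtree hleaf hj k i hk
  · rintro rfl
    exact ⟨hj, 0, rfl⟩

lemma msel_leaf {τ : N → ℝ} (hτ : Function.Injective τ) {j : N} (hj : leaf j) :
    msel parent leaf τ j = j := by
  apply msel_eq hroot hdepth0 hparent hleaf hτ
  · rw [Dset_leaf hroot hdepth0 hparent hleaf hj]; simp
  · rw [Dset_leaf hroot hdepth0 hparent hleaf hj]; simp

lemma msel_mem_leaf (τ : N → ℝ) (a : N) : leaf (msel parent leaf τ a) ∧
    ∃ k, parent^[k] (msel parent leaf τ a) = a := by
  have := (msel_spec hroot hdepth0 hparent hleaf τ a).1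
  simpa [Dset] using this


lemma W_sum {S : Finset N} (hS : ∀ u, parent u ∈ S → u ∈ S) (τ : N → ℝ) :
    (W parent leaf τ S).sum = S.card := by
  rw [W]
  have : ∀ a ∈ S, msel parent leaf τ a ∈ S.filter leaf := by
    intro a ha
    obtain ⟨h1, k, hk⟩ := msel_mem_leaf hroot hdepth0 hparent hleaf τ a
    exact Finset.mem_filter.2 ⟨subtree_closed hS ha k _ hk, h1⟩
  rw [Finset.card_eq_sum_card_fiberwise this]
  rfl

end Tree

lemma subperm_sum_le {l m : List ℕ} (h : l.Subperm m) : l.sum ≤ m.sum := by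
  have h' : (↑l : Multiset ℕ) ≤ ↑m := Multiset.coe_le.2 h
  obtain ⟨u, hu⟩ := Multiset.le_iff_exists_add.1 h'
  have h2 : m.sum = l.sum + u.sum := by simpa using (by rw [hu, Multiset.sum_add] :
    (↑m : Multiset ℕ).sum = (↑l : Multiset ℕ).sum + u.sum)
  omega

lemma notmem_subperm_cons {m l : List ℕ} {a : ℕ} (h : m.Subperm (a :: l)) (ha : a ∉ m) :
    m.Subperm l := by
  rw [← Multiset.coe_le] at h ⊢
  rw [Multiset.le_iff_count] at h ⊢
  intro b
  have := h b
  rcases eq_or_ne b a with rfl | hb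
  · have : Multiset.count b ↑m = 0 := by
      simp [Multiset.count_eq_zero, ha]
    omega
  · simpa [Multiset.count_cons, List.count_cons, hb, hb.symm] using this

lemma sorted_drop_max : ∀ (l : List ℕ), l.Pairwise (· ≤ ·) → ∀ (m : List ℕ) (c : ℕ),
    m.Subperm l → m.length ≤ c → m.sum ≤ (l.drop (l.length - c)).sum := by
  intro l
  induction l with
  | nil =>
    intro _ m c hm _
    rw [List.subperm_nil.1 hm]
    simp
  | cons a l ih =>
    intro hs m c hm hc
    have hal : ∀ b ∈ l, a ≤ b := (List.pairwise_cons.1 hs).1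
    have hsl : l.Pairwise (· ≤ ·) := (List.pairwise_cons.1 hs).2
    rcases le_or_gt (l.length + 1) c with hcase | hcase
    · have h0 : (a :: l).length - c = 0 := by simp only [List.length_cons]; omega
      rw [h0, List.drop_zero]
      exact subperm_sum_le hm
    · have hdrop : (a :: l).drop ((a :: l).length - c) = l.drop (l.length - c) := by
        have h1 : (a :: l).length - c = (l.length - c) + 1 := by
          simp only [List.length_cons]; omega
        rw [h1, List.drop_succ_cons]
      rw [hdrop]
      by_cases ham : a ∈ m
      · have hc1 : 1 ≤ c := by
          have : 0 < m.length := List.length_pos_of_mem ham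
          omega
        have hme : (m.erase a).Subperm l := by
          have h2 : (↑m : Multiset ℕ) ≤ ↑(a :: l) := Multiset.coe_le.2 hm
          have h3 := Multiset.erase_le_erase a h2
          rw [Multiset.coe_erase] at h3
          have h4 : (↑(a :: l) : Multiset ℕ).erase a = ↑l := by
            rw [← Multiset.cons_coe, Multiset.erase_cons_head]
          rw [h4] at h3
          exact Multiset.coe_le.1 h3
        have hlen : (m.erase a).length ≤ c - 1 := by
          rw [List.length_erase_of_mem ham]; omega
        have hih := ih hsl (m.erase a) (c - 1) hme hlen
        have hcl : c ≤ l.length := by omega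
        have hk : l.length - (c - 1) = (l.length - c) + 1 := by omega
        rw [hk] at hih
        have hlt : l.length - c < l.length := by omega
        rw [List.drop_eq_getElem_cons hlt]
        have hsum : m.sum = a + (m.erase a).sum := by
          have := (List.perm_cons_erase ham).sum_eq
          simpa using this
        have hge : a ≤ l[l.length - c] := hal _ (l.getElem_mem hlt)
        simp only [List.sum_cons]
        omega
      · exact ih hsl m c (notmem_subperm_cons hm ham) hc

lemma sum_le_g {M S : Multiset ℕ} (h : S ≤ M) {c : ℕ} (hc : Multiset.card S ≤ c) :
    S.sum ≤ g c M := by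
  have hsp : (S.sort (· ≤ ·)).Subperm (M.sort (· ≤ ·)) := by
    rw [← Multiset.coe_le, Multiset.sort_eq, Multiset.sort_eq]
    exact h
  have hlen : (S.sort (· ≤ ·)).length ≤ c := by rw [Multiset.length_sort]; exact hc
  have := sorted_drop_max (M.sort (· ≤ ·)) (Multiset.pairwise_sort _ _) (S.sort (· ≤ ·)) c hsp hlen
  rw [Multiset.length_sort] at this
  have hs : (S.sort (· ≤ ·)).sum = S.sum := by
    rw [← Multiset.sum_coe, Multiset.sort_eq]
  rw [hs] at this
  exact this

lemma exists_g (c : ℕ) (M : Multiset ℕ) :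
    ∃ S ≤ M, Multiset.card S = min c (Multiset.card M) ∧ S.sum = g c M := by
  refine ⟨↑((M.sort (· ≤ ·)).drop (Multiset.card M - c)), ?_, ?_, ?_⟩
  · have h1 : ((M.sort (· ≤ ·)).drop (Multiset.card M - c)).Subperm (M.sort (· ≤ ·)) :=
      (List.drop_sublist _ _).subperm
    have h2 := Multiset.coe_le.2 h1
    rwa [Multiset.sort_eq] at h2
  · rw [Multiset.coe_card, List.length_drop, Multiset.length_sort]
    omega
  · rw [Multiset.sum_coe]
    rfl

lemma g_cons {M : Multiset ℕ} {p c : ℕ} (hc : 1 ≤ c) :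
    p + g (c - 1) M ≤ g c (p ::ₘ M) := by
  obtain ⟨S, hSM, hcard, hsum⟩ := exists_g (c - 1) M
  have h1 : p ::ₘ S ≤ p ::ₘ M := Multiset.cons_le_cons _ hSM
  have h2 : Multiset.card (p ::ₘ S) ≤ c := by
    rw [Multiset.card_cons, hcard]
    have := min_le_left (c - 1) (Multiset.card M)
    omega
  have := sum_le_g h1 h2
  rw [Multiset.sum_cons, hsum] at this
  exact this

lemma le_map_exists {β γ : Type*} [DecidableEq β] [DecidableEq γ] (f : β → γ) (S : Multiset γ) :
    ∀ (M : Multiset β), S ≤ M.map f → ∃ M' ≤ M, S = M'.map f := by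
  induction S using Multiset.induction_on with
  | empty => intro M _; exact ⟨0, Multiset.zero_le M, rfl⟩
  | cons a S ih =>
    intro M h
    have ha : a ∈ M.map f := Multiset.mem_of_le h (Multiset.mem_cons_self a S)
    obtain ⟨b, hb, rfl⟩ := Multiset.mem_map.1 ha
    have hS : S ≤ (M.erase b).map f := by
      have h1 : S ≤ (M.map f).erase (f b) := by
        have := Multiset.erase_le_erase (f b) h
        rwa [Multiset.erase_cons_head] at this
      have h2 : (M.map f).erase (f b) = (M.erase b).map f := by
        conv_lhs => rw [← Multiset.cons_erase hb]
        rw [Multiset.map_cons, Multiset.erase_cons_head]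
      rwa [h2] at h1
    obtain ⟨M'', hM'', rfl⟩ := ih (M.erase b) hS
    refine ⟨b ::ₘ M'', ?_, by rw [Multiset.map_cons]⟩
    calc b ::ₘ M'' ≤ b ::ₘ M.erase b := Multiset.cons_le_cons _ hM''
    _ = M := Multiset.cons_erase hb

lemma le_finset_val {T : Type*} [DecidableEq T] {L : Finset T} {S : Multiset T} (h : S ≤ L.val) :
    ∃ F : Finset T, F ⊆ L ∧ F.val = S := by
  have hn : S.Nodup := Multiset.nodup_of_le h L.nodup
  exact ⟨⟨S, hn⟩, Finset.val_le_iff.1 h, rfl⟩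


lemma iter_shift {α : Type*} (f : α → α) {m n k : ℕ} (x : α) (h : m + n = k) :
    f^[m] (f^[n] x) = f^[k] x := by
  rw [← Function.iterate_add_apply, h]

section Tree2

variable {parent : N → N} {depth : N → ℕ} {root : N}
  (hroot : parent root = root)
  (hdepth0 : ∀ v, depth v = 0 ↔ v = root)
  (hparent : ∀ v, v ≠ root → depth v = depth (parent v) + 1)
  {leaf : N → Prop} (hleaf : ∀ v, leaf v ↔ ∀ u, parent u = v → u = v)
  {σstar : N → ℝ} (hstarinj : Function.Injective σstar)
  (hstar : ∀ i j, leaf i → leaf j → depth i < depth j → σstar i < σstar j)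

omit [Fintype N] in
lemma mem_chainF {j x : N} {s : ℕ} :
    x ∈ chainF parent j s ↔ ∃ m, m < s ∧ parent^[m] j = x := by
  simp [chainF, Finset.mem_image, Finset.mem_range]

omit [Fintype N] in
lemma chainF_mono {j : N} {s t : ℕ} (h : s ≤ t) : chainF parent j s ⊆ chainF parent j t := by
  intro x hx
  rw [mem_chainF] at hx ⊢
  obtain ⟨m, hm, hx⟩ := hx
  exact ⟨m, lt_of_lt_of_le hm h, hx⟩

include hroot hdepth0 hparent in
lemma card_chainF {j : N} {s : ℕ} (h : s ≤ depth j + 1) : (chainF parent j s).card = s := by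
  rw [chainF, Finset.card_image_of_injOn, Finset.card_range]
  intro x hx y hy hxy
  simp only [Finset.coe_range, Set.mem_Iio] at hx hy
  exact iterate_inj hroot hdepth0 hparent (by omega) (by omega) hxy

include hroot hdepth0 hparent hleaf hstarinj hstar in
lemma depth_le_of_star {i j : N} (hi : leaf i) (hj : leaf j) (h : σstar i ≤ σstar j) :
    depth i ≤ depth j := by
  by_contra hc
  exact absurd (hstar j i hj hi (by omega)) (by linarith)

include hroot hdepth0 hparent hleaf hstarinj hstar in
theorem maxCover : ∀ (n : ℕ) (S : Finset N), S.card ≤ n → (∀ u, parent u ∈ S → u ∈ S) →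
    ∀ (T : Finset N) (s : N → ℕ),
    (∀ j ∈ T, leaf j ∧ 1 ≤ s j ∧ s j ≤ depth j + 1 ∧ chainF parent j (s j) ⊆ S) →
    (∀ j ∈ T, ∀ j' ∈ T, j ≠ j' → Disjoint (chainF parent j (s j)) (chainF parent j' (s j'))) →
    ∑ j ∈ T, s j ≤ g T.card (W parent leaf σstar S) := by
  intro n
  induction n with
  | zero =>
    intro S hcard hS T s hT hdisj
    have hSe : S = ∅ := Finset.card_eq_zero.1 (le_antisymm hcard (Nat.zero_le _))
    have hTe : T = ∅ := by
      by_contra h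
      obtain ⟨j, hj⟩ := Finset.nonempty_iff_ne_empty.2 h
      have := (hT j hj).2.2.2 (by
        rw [mem_chainF]
        exact ⟨0, (hT j hj).2.1, rfl⟩)
      rw [hSe] at this
      exact absurd this (Finset.notMem_empty _)
    rw [hTe]
    simp
  | succ n ih =>
    intro S hcard hS T s hT hdisj
    rcases Finset.eq_empty_or_nonempty T with rfl | ⟨j₁, hj₁⟩
    · simp
    have hj₁S : j₁ ∈ S := (hT j₁ hj₁).2.2.2 (by
      rw [mem_chainF]; exact ⟨0, (hT j₁ hj₁).2.1, rfl⟩)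
    -- the K function
    set K : N → ℕ := fun x => Nat.findGreatest (fun k => ∀ m ≤ k, parent^[m] x ∈ S) (depth x)
      with hK
    have k1 : ∀ x ∈ S, ∀ m ≤ K x, parent^[m] x ∈ S := by
      intro x hx
      have h0 : (fun k => ∀ m ≤ k, parent^[m] x ∈ S) 0 := by
        intro m hm
        simpa [Nat.le_zero.1 hm] using hx
      exact Nat.findGreatest_spec (P := fun k => ∀ m ≤ k, parent^[m] x ∈ S) (Nat.zero_le _) h0
    have kle : ∀ x, K x ≤ depth x := fun x => Nat.findGreatest_le _
    have k3 : ∀ x k, k ≤ depth x → (∀ m ≤ k, parent^[m] x ∈ S) → k ≤ K x := by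
      intro x k hk h
      exact Nat.le_findGreatest hk h
    have k2 : ∀ x ∈ S, K x < depth x → parent (parent^[K x] x) ∉ S := by
      intro x hx hkx hmem
      have : K x + 1 ≤ K x := k3 x (K x + 1) (by omega) (by
        intro m hm
        rcases Nat.lt_or_ge m (K x + 1) with h | h
        · exact k1 x hx m (by omega)
        · have : m = K x + 1 := by omega
          rw [this, Function.iterate_succ_apply']
          exact hmem)
      omega
    -- choose the leaf with max K
    obtain ⟨l₀, hl₀mem, hl₀max⟩ := Finset.exists_max_image (S.filter leaf) K
      ⟨j₁, Finset.mem_filter.2 ⟨hj₁S, (hT j₁ hj₁).1⟩⟩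
    obtain ⟨hl₀S, hl₀leaf⟩ := Finset.mem_filter.1 hl₀mem
    set r₀ : N := parent^[K l₀] l₀ with hr₀
    have hr₀S : r₀ ∈ S := k1 l₀ hl₀S _ le_rfl
    set jhat : N := msel parent leaf σstar r₀ with hjhat
    obtain ⟨hjhatD, hjhatmax⟩ := msel_spec hroot hdepth0 hparent hleaf σstar r₀
    rw [← hjhat] at hjhatD hjhatmax
    have hjhatleaf : leaf jhat := by
      have := Finset.mem_filter.1 hjhatD; exact this.2.1
    have hjhatanc : ∃ k, parent^[k] jhat = r₀ := by
      have := Finset.mem_filter.1 hjhatD; exact this.2.2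
    have hjhatS : S.filter leaf ⊆ S := Finset.filter_subset _ _
    have hjhatinS : jhat ∈ S := by
      obtain ⟨k, hk⟩ := hjhatanc
      exact subtree_closed hS hr₀S k jhat hk
    obtain ⟨kj, hkjle, hkj⟩ := anc_small hroot hdepth0 hparent hjhatanc
    -- depth facts
    have hdl₀ : depth r₀ + K l₀ = depth l₀ := depth_iterate hroot hdepth0 hparent _ (kle l₀)
    have hdjhat : depth r₀ + kj = depth jhat := by
      have := depth_iterate (x := jhat) hroot hdepth0 hparent kj hkjle
      rw [hkj] at this; omega
    have hdepthl₀jhat : depth l₀ ≤ depth jhat := by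
      apply depth_le_of_star hroot hdepth0 hparent hleaf hstarinj hstar hl₀leaf hjhatleaf
      apply hjhatmax
      simp only [Dset, Finset.mem_filter, Finset.mem_univ, true_and]
      exact ⟨hl₀leaf, K l₀, rfl⟩
    have hkjKl₀ : K l₀ ≤ kj := by omega
    have hKjhat : K jhat = kj := by
      have hge : kj ≤ K jhat := by
        apply k3 jhat kj hkjle
        intro m hm
        apply subtree_closed hS hr₀S (kj - m)
        rw [iter_shift parent _ (by omega : kj - m + m = kj)]
        exact hkj
      by_contra hne
      have hlt : kj < K jhat := by omega
      have hmem : parent r₀ ∈ S := by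
        have := k1 jhat hjhatinS (kj + 1) (by omega)
        rwa [Function.iterate_succ_apply', hkj] at this
      rcases Nat.lt_or_ge (K l₀) (depth l₀) with hc | hc
      · exact (k2 l₀ hl₀S hc) hmem
      · have hKl₀ : K l₀ = depth l₀ := le_antisymm (kle l₀) hc
        have hr₀root : r₀ = root := by
          rw [hr₀, hKl₀]
          exact iterate_root hroot hdepth0 hparent _ le_rfl
        have hd0 : depth r₀ = 0 := by rw [hr₀root]; exact (hdepth0 root).2 rfl
        have := kle jhat
        omega
    have hKleaves : ∀ j ∈ S, leaf j → K j ≤ kj := by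
      intro j hjS hjleaf
      exact le_trans (hl₀max j (Finset.mem_filter.2 ⟨hjS, hjleaf⟩)) hkjKl₀
    -- The top path P
    set P : Finset N := chainF parent jhat (kj + 1) with hP
    have hPfilter : P = S.filter (fun a => msel parent leaf σstar a = jhat) := by
      ext x
      rw [hP, mem_chainF, Finset.mem_filter]
      constructor
      · rintro ⟨m, hm, rfl⟩
        have hmS : parent^[m] jhat ∈ S := by
          apply subtree_closed hS hr₀S (kj - m)
          rw [iter_shift parent _ (by omega : kj - m + m = kj)]
          exact hkj
        refine ⟨hmS, ?_⟩
        apply msel_eq hroot hdepth0 hparent hleaf hstarinj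
        · simp only [Dset, Finset.mem_filter, Finset.mem_univ, true_and]
          exact ⟨hjhatleaf, m, rfl⟩
        · intro i hi
          apply hjhatmax
          simp only [Dset, Finset.mem_filter, Finset.mem_univ, true_and] at hi ⊢
          obtain ⟨hileaf, mi, hmi⟩ := hi
          refine ⟨hileaf, (kj - m) + mi, ?_⟩
          rw [Function.iterate_add_apply, hmi, iter_shift parent _ (by omega : kj - m + m = kj)]
          exact hkj
      · rintro ⟨hxS, hxm⟩
        have hjx : ∃ m, parent^[m] jhat = x := by
          have h1 := (msel_spec hroot hdepth0 hparent hleaf σstar x).1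
          rw [hxm] at h1
          simpa [Dset] using (Finset.mem_filter.1 h1).2.2
        obtain ⟨m, hmle, hm⟩ := anc_small hroot hdepth0 hparent hjx
        have hmK : m ≤ K jhat := by
          apply k3 jhat m hmle
          intro m' hm'
          apply subtree_closed hS hxS (m - m')
          rw [iter_shift parent _ (by omega : m - m' + m' = m)]
          exact hm
        exact ⟨m, by omega, hm⟩
    have hPcard : P.card = kj + 1 := card_chainF hroot hdepth0 hparent (by omega)
    have hjhatP : jhat ∈ P := by rw [mem_chainF]; exact ⟨0, by omega, rfl⟩
    have hPS : P ⊆ S := by rw [hPfilter]; exact Finset.filter_subset _ _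
    have hPleaf : ∀ x ∈ P, leaf x → x = jhat := by
      intro x hx hxleaf
      rw [mem_chainF] at hx
      obtain ⟨m, _, hm⟩ := hx
      exact (leaf_subtree hleaf hxleaf m jhat hm).symm
    -- the new forest
    set S' : Finset N := S \ P with hS'
    have hS'closed : ∀ u, parent u ∈ S' → u ∈ S' := by
      intro u hu
      rw [hS', Finset.mem_sdiff] at hu ⊢
      obtain ⟨huS, huP⟩ := hu
      refine ⟨hS u huS, ?_⟩
      intro huPmem
      rw [hP, mem_chainF] at huPmem
      obtain ⟨m, hm, hmu⟩ := huPmem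
      rcases Nat.lt_or_ge m kj with hmlt | hmge
      · apply huP
        rw [hP, mem_chainF]
        exact ⟨m + 1, by omega, by rw [Function.iterate_succ_apply', hmu]⟩
      · have hmkj : m = kj := by omega
        have hur : u = r₀ := by rw [← hmu, hmkj, hkj]
        rcases Nat.lt_or_ge (K l₀) (depth l₀) with hc | hc
        · refine (k2 l₀ hl₀S hc) ?_
          rw [← hr₀, ← hur]
          exact huS
        · have hKl₀ : K l₀ = depth l₀ := le_antisymm (kle l₀) hc
          have hr₀root : r₀ = root := by
            rw [hr₀, hKl₀]
            exact iterate_root hroot hdepth0 hparent _ le_rfl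
          apply huP
          have hpu : parent u = u := by rw [hur, hr₀root]; exact hroot
          rw [hpu]
          rw [hP, mem_chainF]
          exact ⟨m, by omega, hmu⟩
    have hS'card : S'.card ≤ n := by
      rw [hS', Finset.card_sdiff_of_subset hPS, hPcard]
      omega
    have hjhatSleaf : jhat ∈ S.filter leaf := Finset.mem_filter.2 ⟨hjhatinS, hjhatleaf⟩
    have hfleaf : S'.filter leaf = (S.filter leaf).erase jhat := by
      ext x
      rw [Finset.mem_erase, Finset.mem_filter, Finset.mem_filter, hS', Finset.mem_sdiff]
      constructor
      · rintro ⟨⟨hxS, hxP⟩, hxleaf⟩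
        exact ⟨fun h => hxP (h ▸ hjhatP), ⟨hxS, hxleaf⟩⟩
      · rintro ⟨hne, hxS, hxleaf⟩
        exact ⟨⟨hxS, fun hxP => hne (hPleaf x hxP hxleaf)⟩, hxleaf⟩
    have hWdecomp : W parent leaf σstar S = (kj + 1) ::ₘ W parent leaf σstar S' := by
      rw [W, W]
      have hval : (S.filter leaf).val = jhat ::ₘ (S.filter leaf).val.erase jhat :=
        (Multiset.cons_erase (Finset.mem_val.mpr hjhatSleaf)).symm
      rw [hval, Multiset.map_cons]
      congr 1
      · rw [← hPfilter, hPcard]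
      · have hval' : (S'.filter leaf).val = (S.filter leaf).val.erase jhat := by
          rw [hfleaf, Finset.erase_val]
        rw [hval']
        apply Multiset.map_congr rfl
        intro x hx
        have hxe : x ∈ (S.filter leaf).erase jhat := by
          rw [← Finset.erase_val] at hx
          exact hx
        have hxne : x ≠ jhat := (Finset.mem_erase.1 hxe).1
        congr 1
        ext b
        rw [Finset.mem_filter, Finset.mem_filter, hS', Finset.mem_sdiff]
        constructor
        · rintro ⟨hbS, hbm⟩
          refine ⟨⟨hbS, fun hbP => ?_⟩, hbm⟩
          have := Finset.mem_filter.1 (hPfilter ▸ hbP)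
          exact hxne (hbm ▸ this.2.symm ▸ rfl)
        · rintro ⟨⟨hbS, _⟩, hbm⟩
          exact ⟨hbS, hbm⟩
    -- the family split
    set Tp : Finset N := T.filter (fun j => ((chainF parent j (s j)) ∩ P).Nonempty) with hTp
    set a : N → ℕ := fun j =>
      if h : ∃ i, i < s j ∧ parent^[i] j ∈ P then Nat.find h else 0 with ha
    have haP : ∀ j ∈ Tp, a j < s j ∧ parent^[a j] j ∈ P ∧ ∀ i, i < a j → parent^[i] j ∉ P := by
      intro j hj
      have hjex : ∃ i, i < s j ∧ parent^[i] j ∈ P := by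
        obtain ⟨x, hx⟩ := (Finset.mem_filter.1 hj).2
        rw [Finset.mem_inter, mem_chainF] at hx
        obtain ⟨⟨m, hm, hmx⟩, hxP⟩ := hx
        exact ⟨m, hm, by rwa [hmx]⟩
      rw [ha]
      simp only [dif_pos hjex]
      refine ⟨(Nat.find_spec hjex).1, (Nat.find_spec hjex).2, ?_⟩
      intro i hi hiP
      have hisj : i < s j := by
        have := (Nat.find_spec hjex).1; omega
      exact Nat.find_min hjex hi ⟨hisj, hiP⟩
    set μ : N → ℕ := fun j => depth jhat - depth (parent^[a j] j) with hμ
    -- position facts for j ∈ Tp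
    have hpos : ∀ j ∈ Tp, parent^[μ j] jhat = parent^[a j] j ∧ μ j ≤ kj ∧
        depth (parent^[a j] j) + μ j = depth jhat := by
      intro j hj
      obtain ⟨h1, h2, _⟩ := haP j hj
      rw [hP, mem_chainF] at h2
      obtain ⟨m, hm, hmeq⟩ := h2
      have hd : depth (parent^[m] jhat) + m = depth jhat :=
        depth_iterate hroot hdepth0 hparent m (by omega)
      have hμm : μ j = m := by
        have : μ j = depth jhat - depth (parent^[a j] j) := rfl
        rw [this, ← hmeq]
        omega
      refine ⟨by rw [hμm]; exact hmeq, by omega, ?_⟩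
      rw [hμm, ← hmeq]
      omega
    have haltj : ∀ j ∈ Tp, a j < s j := fun j hj => (haP j hj).1
    have hTpT : Tp ⊆ T := Finset.filter_subset _ _
    obtain ⟨j₀, hj₀T, hbr, hTp1⟩ :
        ∃ j₀ ∈ T, (s j₀ + ∑ j ∈ Tp.erase j₀, (s j - a j) ≤ kj + 1) ∧
          (∀ j ∈ Tp.erase j₀, 1 ≤ a j) := by
      rcases Finset.eq_empty_or_nonempty Tp with hTpe | hTpe
      · refine ⟨j₁, hj₁, ?_, ?_⟩
        · rw [hTpe, Finset.erase_empty, Finset.sum_empty]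
          have hsub : s j₁ - 1 ≤ K j₁ := by
            apply k3 j₁ (s j₁ - 1) (by have := (hT j₁ hj₁).2.2.1; omega)
            intro m hm
            exact (hT j₁ hj₁).2.2.2 (mem_chainF.2 ⟨m, by have := (hT j₁ hj₁).2.1; omega, rfl⟩)
          have hKj₁ : K j₁ ≤ kj := hKleaves j₁ hj₁S (hT j₁ hj₁).1
          omega
        · rw [hTpe, Finset.erase_empty]
          intro j hj
          exact absurd hj (Finset.notMem_empty j)
      · obtain ⟨j₀, hj₀Tp, hj₀min⟩ := Finset.exists_min_image Tp μ hTpe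
        have hj₀T : j₀ ∈ T := hTpT hj₀Tp
        obtain ⟨ha₀lt, ha₀P, ha₀min⟩ := haP j₀ hj₀Tp
        obtain ⟨hpos₀, hμ₀kj, hd₀⟩ := hpos j₀ hj₀Tp
        have ha₀depth : a j₀ ≤ depth j₀ := by
          have := (hT j₀ hj₀T).2.2.1; omega
        have hda₀ : depth (parent^[a j₀] j₀) + a j₀ = depth j₀ :=
          depth_iterate hroot hdepth0 hparent _ ha₀depth
        have hdj₀ : depth j₀ ≤ depth jhat := by
          apply depth_le_of_star hroot hdepth0 hparent hleaf hstarinj hstar (hT j₀ hj₀T).1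
            hjhatleaf
          apply hjhatmax
          simp only [Dset, Finset.mem_filter, Finset.mem_univ, true_and]
          refine ⟨(hT j₀ hj₀T).1, (kj - μ j₀) + a j₀, ?_⟩
          rw [Function.iterate_add_apply, ← hpos₀,
            iter_shift parent _ (by omega : kj - μ j₀ + μ j₀ = kj)]
          exact hkj
        have ha₀β : a j₀ ≤ μ j₀ := by omega
        have hkey : ∀ j ∈ Tp, ∀ i, a j ≤ i → i < s j →
            ∃ c, μ j ≤ c ∧ c ≤ kj ∧ parent^[c] jhat = parent^[i] j := by
          intro j hj i hai his
          obtain ⟨hajlt, hajP, hajmin⟩ := haP j hj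
          obtain ⟨hposj, hμjkj, hdj⟩ := hpos j hj
          have hsdj : s j ≤ depth j + 1 := (hT j (hTpT hj)).2.2.1
          have hadepth : a j ≤ depth j := by omega
          have hdaj : depth (parent^[a j] j) + a j = depth j :=
            depth_iterate hroot hdepth0 hparent _ hadepth
          have he2 : parent^[(i - a j) + μ j] jhat = parent^[i] j := by
            calc parent^[(i - a j) + μ j] jhat
                = parent^[i - a j] (parent^[μ j] jhat) :=
                  Function.iterate_add_apply parent (i - a j) (μ j) jhat
            _ = parent^[i - a j] (parent^[a j] j) := by rw [hposj]
            _ = parent^[i] j := iter_shift parent _ (by omega : (i - a j) + a j = i)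
          have hcle : (i - a j) + μ j ≤ depth jhat := by omega
          have hcK : (i - a j) + μ j ≤ K jhat := by
            apply k3 jhat _ hcle
            intro m hm
            rcases le_or_gt m (μ j) with hmμ | hmμ
            · apply hPS
              rw [hP, mem_chainF]
              exact ⟨m, by omega, rfl⟩
            · have he1 : parent^[m] jhat = parent^[(m - μ j) + a j] j := by
                calc parent^[m] jhat = parent^[(m - μ j) + μ j] jhat := by
                      congr 1; omega
                _ = parent^[m - μ j] (parent^[μ j] jhat) :=
                    Function.iterate_add_apply parent (m - μ j) (μ j) jhat
                _ = parent^[m - μ j] (parent^[a j] j) := by rw [hposj]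
                _ = parent^[(m - μ j) + a j] j := iter_shift parent _ rfl
              rw [he1]
              apply (hT j (hTpT hj)).2.2.2
              exact mem_chainF.2 ⟨(m - μ j) + a j, by omega, rfl⟩
          exact ⟨(i - a j) + μ j, by omega, by omega, he2⟩
        set Pb : Finset N := (Finset.Icc (μ j₀) kj).image (fun m => parent^[m] jhat) with hPb
        have hPbcard : Pb.card = kj + 1 - μ j₀ := by
          rw [hPb, Finset.card_image_of_injOn, Nat.card_Icc]
          intro x hx y hy hxy
          simp only [Finset.coe_Icc, Set.mem_Icc] at hx hy
          exact iterate_inj hroot hdepth0 hparent (by omega) (by omega) hxy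
        have hIrepr : ∀ j ∈ Tp, chainF parent j (s j) ∩ P
            = (Finset.Ico (a j) (s j)).image (fun i => parent^[i] j) := by
          intro j hj
          obtain ⟨hajlt, hajP, hajmin⟩ := haP j hj
          ext x
          simp only [Finset.mem_inter, mem_chainF, Finset.mem_image, Finset.mem_Ico]
          constructor
          · rintro ⟨⟨i, his, rfl⟩, hxP⟩
            refine ⟨i, ⟨?_, his⟩, rfl⟩
            by_contra hlt
            exact (hajmin i (by omega)) hxP
          · rintro ⟨i, ⟨hai, his⟩, rfl⟩
            obtain ⟨c, hc1, hc2, hc3⟩ := hkey j hj i hai his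
            refine ⟨⟨i, his, rfl⟩, ?_⟩
            rw [← hc3, hP, mem_chainF]
            exact ⟨c, by omega, rfl⟩
        have hIPb : ∀ j ∈ Tp, chainF parent j (s j) ∩ P ⊆ Pb := by
          intro j hj x hx
          rw [hIrepr j hj, Finset.mem_image] at hx
          obtain ⟨i, hi, rfl⟩ := hx
          rw [Finset.mem_Ico] at hi
          obtain ⟨c, hc1, hc2, hc3⟩ := hkey j hj i hi.1 hi.2
          rw [hPb, Finset.mem_image]
          have hμβ : μ j₀ ≤ μ j := hj₀min j hj
          exact ⟨c, Finset.mem_Icc.2 ⟨by omega, hc2⟩, hc3⟩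
        have hIcard : ∀ j ∈ Tp, (chainF parent j (s j) ∩ P).card = s j - a j := by
          intro j hj
          rw [hIrepr j hj, Finset.card_image_of_injOn, Nat.card_Ico]
          intro x hx y hy hxy
          simp only [Finset.coe_Ico, Set.mem_Ico] at hx hy
          have hsd : s j ≤ depth j + 1 := (hT j (hTpT hj)).2.2.1
          exact iterate_inj hroot hdepth0 hparent (by omega) (by omega) hxy
        have hsumI : ∑ j ∈ Tp, (s j - a j) ≤ kj + 1 - μ j₀ := by
          have h1 : ∑ j ∈ Tp, (s j - a j)
              = ∑ j ∈ Tp, (chainF parent j (s j) ∩ P).card :=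
            Finset.sum_congr rfl (fun j hj => (hIcard j hj).symm)
          have h2 : (Tp.biUnion (fun j => chainF parent j (s j) ∩ P)).card
              = ∑ j ∈ Tp, (chainF parent j (s j) ∩ P).card := by
            apply Finset.card_biUnion
            intro j hj j' hj' hne
            apply Finset.disjoint_of_subset_left Finset.inter_subset_left
            apply Finset.disjoint_of_subset_right Finset.inter_subset_left
            exact hdisj j (hTpT hj) j' (hTpT hj') hne
          have h3 : Tp.biUnion (fun j => chainF parent j (s j) ∩ P) ⊆ Pb :=
            Finset.biUnion_subset.2 hIPb
          calc ∑ j ∈ Tp, (s j - a j)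
              = (Tp.biUnion (fun j => chainF parent j (s j) ∩ P)).card := by rw [h1, h2]
          _ ≤ Pb.card := Finset.card_le_card h3
          _ = kj + 1 - μ j₀ := hPbcard
        refine ⟨j₀, hj₀T, ?_, ?_⟩
        · have hsplit : ∑ j ∈ Tp.erase j₀, (s j - a j) + (s j₀ - a j₀)
              = ∑ j ∈ Tp, (s j - a j) := Finset.sum_erase_add Tp _ hj₀Tp
          omega
        · intro j hj
          obtain ⟨hjne, hjTp⟩ := Finset.mem_erase.1 hj
          by_contra h1
          have haj0 : a j = 0 := by omega
          obtain ⟨hajlt, hajP, _⟩ := haP j hjTp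
          rw [haj0] at hajP
          have hjleaf : leaf j := (hT j (hTpT hjTp)).1
          have hjjhat : j = jhat := hPleaf j (by simpa using hajP) hjleaf
          have hμj : μ j = 0 := by
            have hh : μ j = depth jhat - depth (parent^[a j] j) := rfl
            rw [hh, haj0]
            simp [hjjhat]
          have hμ₀0 : μ j₀ = 0 := by
            have := hj₀min j hjTp
            omega
          have heq : parent^[a j₀] j₀ = jhat := by
            have := hpos₀.symm
            rw [hμ₀0] at this
            simpa using this
          have hin1 : jhat ∈ chainF parent j₀ (s j₀) := mem_chainF.2 ⟨a j₀, ha₀lt, heq⟩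
          have hin2 : jhat ∈ chainF parent j (s j) := by
            refine mem_chainF.2 ⟨0, ?_, ?_⟩
            · exact (hT j (hTpT hjTp)).2.1
            · simp [hjjhat]
          have hd := hdisj j₀ hj₀T j (hTpT hjTp) (Ne.symm hjne)
          exact absurd hin2 (Finset.disjoint_left.1 hd hin1)
    set T' : Finset N := T.erase j₀ with hT'def
    set s' : N → ℕ := fun j => if j ∈ Tp then a j else s j with hs'def
    have hs'le : ∀ j, s' j ≤ s j := by
      intro j
      rw [hs'def]
      by_cases hjp : j ∈ Tp
      · simp only [if_pos hjp]
        exact le_of_lt (haltj j hjp)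
      · simp [if_neg hjp]
    have hT'cond : ∀ j ∈ T', leaf j ∧ 1 ≤ s' j ∧ s' j ≤ depth j + 1
        ∧ chainF parent j (s' j) ⊆ S' := by
      intro j hj
      have hjT : j ∈ T := Finset.mem_of_mem_erase hj
      obtain ⟨hl, h1, h2, h3⟩ := hT j hjT
      refine ⟨hl, ?_, le_trans (hs'le j) h2, ?_⟩
      · by_cases hjp : j ∈ Tp
        · rw [hs'def]; simp only [if_pos hjp]
          exact hTp1 j (Finset.mem_erase.2 ⟨(Finset.mem_erase.1 hj).1, hjp⟩)
        · rw [hs'def]; simp only [if_neg hjp]; exact h1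
      · intro x hx
        rw [hS', Finset.mem_sdiff]
        have hxS : x ∈ S := h3 (chainF_mono (hs'le j) hx)
        refine ⟨hxS, ?_⟩
        by_cases hjp : j ∈ Tp
        · rw [hs'def] at hx; simp only [if_pos hjp] at hx
          rw [mem_chainF] at hx
          obtain ⟨m, hm, rfl⟩ := hx
          exact (haP j hjp).2.2 m hm
        · intro hxP
          apply hjp
          rw [hTp]
          exact Finset.mem_filter.2 ⟨hjT, ⟨x, Finset.mem_inter.2
            ⟨chainF_mono (hs'le j) hx, hxP⟩⟩⟩
    have hT'disj : ∀ j ∈ T', ∀ j' ∈ T', j ≠ j' →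
        Disjoint (chainF parent j (s' j)) (chainF parent j' (s' j')) := by
      intro j hj j' hj' hne
      exact Finset.disjoint_of_subset_left (chainF_mono (hs'le j))
        (Finset.disjoint_of_subset_right (chainF_mono (hs'le j'))
          (hdisj j (Finset.mem_of_mem_erase hj) j' (Finset.mem_of_mem_erase hj') hne))
    have hIH := ih S' hS'card hS'closed T' s' hT'cond hT'disj
    have hacc1 : ∑ j ∈ T', s j = ∑ j ∈ T', s' j + ∑ j ∈ Tp.erase j₀, (s j - a j) := by
      have hptw : ∀ j ∈ T', s j = s' j + (if j ∈ Tp then s j - a j else 0) := by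
        intro j hj
        rw [hs'def]
        by_cases hjp : j ∈ Tp
        · simp only [if_pos hjp]
          have := haltj j hjp
          omega
        · simp only [if_neg hjp]
          omega
      rw [Finset.sum_congr rfl hptw, Finset.sum_add_distrib]
      congr 1
      rw [← Finset.sum_filter]
      apply Finset.sum_congr ?_ (fun _ _ => rfl)
      ext j
      rw [Finset.mem_filter, hT'def, Finset.mem_erase, Finset.mem_erase]
      constructor
      · rintro ⟨hje, hjp⟩
        exact ⟨hje.1, hjp⟩
      · rintro ⟨hne, hjp⟩
        exact ⟨⟨hne, hTpT hjp⟩, hjp⟩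
    have hacc2 : ∑ j ∈ T, s j = s j₀ + ∑ j ∈ T', s j := by
      rw [hT'def]
      exact (Finset.add_sum_erase T s hj₀T).symm
    have hcard1 : 1 ≤ T.card := Finset.card_pos.2 ⟨j₁, hj₁⟩
    have hfinal : (kj + 1) + g (T.card - 1) (W parent leaf σstar S')
        ≤ g T.card (W parent leaf σstar S) := by
      rw [hWdecomp]
      exact g_cons hcard1
    have hT'card : T'.card = T.card - 1 := by
      rw [hT'def]
      exact Finset.card_erase_of_mem hj₀T
    rw [hT'card] at hIH
    omega


include hroot hdepth0 hparent hleaf in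
lemma chain_repr {τ : N → ℝ} (hτ : Function.Injective τ) {j : N} (hj : leaf j) :
    ∃ sj, 1 ≤ sj ∧ sj ≤ depth j + 1 ∧
      Finset.univ.filter (fun a => msel parent leaf τ a = j) = chainF parent j sj := by
  classical
  set KC := Nat.findGreatest (fun k => msel parent leaf τ (parent^[k] j) = j) (depth j) with hKC
  have hbase : msel parent leaf τ (parent^[0] j) = j := by
    simpa using msel_leaf hroot hdepth0 hparent hleaf hτ hj
  have hspec : msel parent leaf τ (parent^[KC] j) = j :=
    Nat.findGreatest_spec (P := fun k => msel parent leaf τ (parent^[k] j) = j)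
      (Nat.zero_le _) hbase
  have hKCle : KC ≤ depth j := Nat.findGreatest_le _
  have hdown : ∀ k, k ≤ depth j → msel parent leaf τ (parent^[k] j) = j →
      ∀ k', k' ≤ k → msel parent leaf τ (parent^[k'] j) = j := by
    intro k hk hmk k' hk'
    apply msel_eq hroot hdepth0 hparent hleaf hτ
    · simp only [Dset, Finset.mem_filter, Finset.mem_univ, true_and]
      exact ⟨hj, k', rfl⟩
    · intro i hi
      have hi' : i ∈ Dset parent leaf (parent^[k] j) := by
        simp only [Dset, Finset.mem_filter, Finset.mem_univ, true_and] at hi ⊢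
        obtain ⟨hileaf, mi, hmi⟩ := hi
        refine ⟨hileaf, (k - k') + mi, ?_⟩
        rw [Function.iterate_add_apply, hmi, iter_shift parent _ (by omega : (k - k') + k' = k)]
      have := (msel_spec hroot hdepth0 hparent hleaf τ (parent^[k] j)).2 i hi'
      rwa [hmk] at this
  refine ⟨KC + 1, by omega, by omega, ?_⟩
  ext x
  rw [Finset.mem_filter, mem_chainF]
  constructor
  · rintro ⟨-, hx⟩
    have h1 := (msel_spec hroot hdepth0 hparent hleaf τ x).1
    rw [hx] at h1
    have h2 : ∃ m, parent^[m] j = x := by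
      simpa [Dset] using (Finset.mem_filter.1 h1).2.2
    obtain ⟨m, hmle, hm⟩ := anc_small hroot hdepth0 hparent h2
    have hmKC : m ≤ KC := by
      apply Nat.le_findGreatest hmle
      rw [hm]
      exact hx
    exact ⟨m, by omega, hm⟩
  · rintro ⟨m, hm, rfl⟩
    exact ⟨Finset.mem_univ _, hdown KC hKCle hspec m (by omega)⟩

include hroot hdepth0 hparent hleaf in
lemma weight_eq {τ : N → ℝ} (hτ : Function.Injective τ) {j : N} (hj : leaf j) :
    1 + Set.ncard {a : N | (∃ k, 0 < k ∧ parent^[k] j = a) ∧ a ≠ j ∧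
      ∀ i, leaf i → (∃ m, parent^[m] i = a) → τ i ≤ τ j}
    = (Finset.univ.filter (fun a => msel parent leaf τ a = j)).card := by
  classical
  have hset : {a : N | (∃ k, 0 < k ∧ parent^[k] j = a) ∧ a ≠ j ∧
      ∀ i, leaf i → (∃ m, parent^[m] i = a) → τ i ≤ τ j}
      = ↑(Finset.univ.filter (fun a => (∃ k, 0 < k ∧ parent^[k] j = a) ∧ a ≠ j ∧
        ∀ i, leaf i → (∃ m, parent^[m] i = a) → τ i ≤ τ j)) := by
    ext a
    simp
  rw [hset, Set.ncard_coe_finset]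
  have hfilter : Finset.univ.filter (fun a => msel parent leaf τ a = j)
      = insert j (Finset.univ.filter (fun a => (∃ k, 0 < k ∧ parent^[k] j = a) ∧ a ≠ j ∧
        ∀ i, leaf i → (∃ m, parent^[m] i = a) → τ i ≤ τ j)) := by
    ext x
    simp only [Finset.mem_filter, Finset.mem_univ, true_and, Finset.mem_insert]
    constructor
    · intro hx
      rcases eq_or_ne x j with rfl | hne
      · exact Or.inl rfl
      · right
        have h1 := (msel_spec hroot hdepth0 hparent hleaf τ x).1
        rw [hx] at h1
        have h2 : ∃ m, parent^[m] j = x := by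
          simpa [Dset] using (Finset.mem_filter.1 h1).2.2
        obtain ⟨m, hm⟩ := h2
        have hm0 : 0 < m := by
          rcases Nat.eq_zero_or_pos m with rfl | h
          · exact absurd (by simpa using hm) hne.symm
          · exact h
        refine ⟨⟨m, hm0, hm⟩, hne, ?_⟩
        intro i hile hmi
        obtain ⟨mi, hmi⟩ := hmi
        have := (msel_spec hroot hdepth0 hparent hleaf τ x).2 i (by
          simp only [Dset, Finset.mem_filter, Finset.mem_univ, true_and]
          exact ⟨hile, mi, hmi⟩)
        rwa [hx] at this
    · rintro (rfl | ⟨⟨k, hk0, hkx⟩, hne, hmax⟩)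
      · exact msel_leaf hroot hdepth0 hparent hleaf hτ hj
      · apply msel_eq hroot hdepth0 hparent hleaf hτ
        · simp only [Dset, Finset.mem_filter, Finset.mem_univ, true_and]
          exact ⟨hj, k, hkx⟩
        · intro i hi
          simp only [Dset, Finset.mem_filter, Finset.mem_univ, true_and] at hi
          obtain ⟨hileaf, mi, hmi⟩ := hi
          exact hmax i hileaf ⟨mi, hmi⟩
  rw [hfilter, Finset.card_insert_of_notMem (by simp)]
  omega

include hroot hdepth0 hparent hleaf in
lemma leafWeights_eq {τ : N → ℝ} (hτ : Function.Injective τ) :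
    leafWeights parent leaf τ = W parent leaf τ Finset.univ := by
  rw [leafWeights, W]
  apply Multiset.map_congr rfl
  intro j hj
  have hjleaf : leaf j := by
    have : j ∈ Finset.univ.filter leaf := hj
    exact (Finset.mem_filter.1 this).2
  exact weight_eq hroot hdepth0 hparent hleaf hτ hjleaf

end Tree2

end LFWaux

open LFWaux

/-- Least favorable weights (Appendix A.3): in a finite rooted tree with leaves at
possibly different depths, the ordering `σ*` ranking leaves in ascending order of
depth (deepest leaf last) yields ascending-sorted weights whose prefix sums are
minimal: for every other ordering `σ` and every `k`,
`∑_{i=1}^k ω_(i)(σ*) ≤ ∑_{i=1}^k ω_(i)(σ)`. -/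
theorem least_favorable_weights
    {N : Type*} [Fintype N] (parent : N → N) (depth : N → ℕ) (root : N)
    (hroot : parent root = root)
    (hdepth0 : ∀ v, depth v = 0 ↔ v = root)
    (hparent : ∀ v, v ≠ root → depth v = depth (parent v) + 1)
    (leaf : N → Prop) (hleaf : ∀ v, leaf v ↔ ∀ u, parent u = v → u = v)
    (σstar : N → ℝ) (hstarinj : Function.Injective σstar)
    (hstar : ∀ i j, leaf i → leaf j → depth i < depth j → σstar i < σstar j)
    (σ : N → ℝ) (hinj : Function.Injective σ) :
    ∀ k : ℕ,
      (((leafWeights parent leaf σstar).sort (· ≤ ·)).take k).sum ≤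
        (((leafWeights parent leaf σ).sort (· ≤ ·)).take k).sum := by
  classical
  intro k
  have hclosed : ∀ u : N, parent u ∈ (Finset.univ : Finset N) → u ∈ Finset.univ :=
    fun u _ => Finset.mem_univ u
  set Ms := W parent leaf σstar Finset.univ with hMs
  set Mσ := W parent leaf σ Finset.univ with hMσ
  have hWs : leafWeights parent leaf σstar = Ms :=
    leafWeights_eq hroot hdepth0 hparent hleaf hstarinj
  have hWσ : leafWeights parent leaf σ = Mσ :=
    leafWeights_eq hroot hdepth0 hparent hleaf hinj
  rw [hWs, hWσ]
  set n := (Finset.univ.filter leaf : Finset N).card with hn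
  have hcardMs : Multiset.card Ms = n := by
    rw [hMs, W]
    simp only [Multiset.card_map]
    rfl
  have hcardMσ : Multiset.card Mσ = n := by
    rw [hMσ, W]
    simp only [Multiset.card_map]
    rfl
  have hsumMs : Ms.sum = (Finset.univ : Finset N).card :=
    W_sum hroot hdepth0 hparent hleaf hclosed σstar
  have hsumMσ : Mσ.sum = (Finset.univ : Finset N).card :=
    W_sum hroot hdepth0 hparent hleaf hclosed σ
  have hlen_s : (Ms.sort (· ≤ ·)).length = n := by rw [Multiset.length_sort, hcardMs]
  have hlen_σ : (Mσ.sort (· ≤ ·)).length = n := by rw [Multiset.length_sort, hcardMσ]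
  have hsum_s : (Ms.sort (· ≤ ·)).sum = Ms.sum := by rw [← Multiset.sum_coe, Multiset.sort_eq]
  have hsum_σ : (Mσ.sort (· ≤ ·)).sum = Mσ.sum := by rw [← Multiset.sum_coe, Multiset.sort_eq]
  rcases le_or_gt n k with hk | hk
  · rw [List.take_of_length_le (by omega), List.take_of_length_le (by omega)]
    rw [hsum_s, hsum_σ, hsumMs, hsumMσ]
  · have hdrop : ((Mσ.sort (· ≤ ·)).drop k).sum ≤ ((Ms.sort (· ≤ ·)).drop k).sum := by
      have hgσ : ((Mσ.sort (· ≤ ·)).drop k).sum = g (n - k) Mσ := by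
        rw [g, hcardMσ]
        congr 2
        omega
      have hgs : ((Ms.sort (· ≤ ·)).drop k).sum = g (n - k) Ms := by
        rw [g, hcardMs]
        congr 2
        omega
      rw [hgσ, hgs]
      obtain ⟨S₀, hS₀le, hS₀card, hS₀sum⟩ := exists_g (n - k) Mσ
      have hS₀le' : S₀ ≤ (Finset.univ.filter leaf : Finset N).val.map
          (fun j => (Finset.univ.filter (fun a => msel parent leaf σ a = j)).card) := by
        rw [hMσ, W] at hS₀le
        exact hS₀le
      obtain ⟨M', hM'le, hM'eq⟩ := le_map_exists _ S₀ _ hS₀le'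
      obtain ⟨T, hTL, hTval⟩ := le_finset_val hM'le
      have hsumT : S₀.sum
          = ∑ j ∈ T, (Finset.univ.filter (fun a => msel parent leaf σ a = j)).card := by
        rw [hM'eq, ← hTval]
        rfl
      set s : N → ℕ := fun j => (Finset.univ.filter (fun a => msel parent leaf σ a = j)).card
        with hs
      have hTleaf : ∀ j ∈ T, leaf j := by
        intro j hj
        exact (Finset.mem_filter.1 (hTL hj)).2
      have hchain : ∀ j ∈ T, 1 ≤ s j ∧ s j ≤ depth j + 1 ∧
          chainF parent j (s j) = Finset.univ.filter (fun a => msel parent leaf σ a = j) := by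
        intro j hj
        obtain ⟨sj, h1, h2, h3⟩ := chain_repr hroot hdepth0 hparent hleaf hinj (hTleaf j hj)
        have hsj : s j = sj := by
          rw [hs]
          simp only
          rw [h3, card_chainF hroot hdepth0 hparent h2]
        rw [hsj]
        exact ⟨h1, h2, h3.symm⟩
      have hmc := maxCover hroot hdepth0 hparent hleaf hstarinj hstar
        (Finset.univ : Finset N).card Finset.univ le_rfl hclosed T s
        (fun j hj => ⟨hTleaf j hj, (hchain j hj).1, (hchain j hj).2.1, by
          rw [(hchain j hj).2.2]; exact Finset.filter_subset _ _⟩)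
        (fun j hj j' hj' hne => by
          rw [(hchain j hj).2.2, (hchain j' hj').2.2]
          rw [Finset.disjoint_left]
          intro x hx1 hx2
          rw [Finset.mem_filter] at hx1 hx2
          exact hne (hx1.2.symm.trans hx2.2))
      have hTcard : T.card = n - k := by
        have hc1 : Multiset.card S₀ = T.card := by
          rw [hM'eq, ← hTval]
          simp
        rw [hcardMσ] at hS₀card
        have hc2 : min (n - k) n = n - k := min_eq_left (by omega)
        omega
      calc g (n - k) Mσ = S₀.sum := hS₀sum.symm
      _ = ∑ j ∈ T, s j := hsumT
      _ ≤ g T.card Ms := hmc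
      _ = g (n - k) Ms := by rw [hTcard]
    have h1 := List.sum_take_add_sum_drop (Ms.sort (· ≤ ·)) k
    have h2 := List.sum_take_add_sum_drop (Mσ.sort (· ≤ ·)) k
    have heq : (Ms.sort (· ≤ ·)).sum = (Mσ.sort (· ≤ ·)).sum := by
      rw [hsum_s, hsum_σ, hsumMs, hsumMσ]
    omega
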